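/- arXiv:1609.02640 — 2 statements merged into one kernel-verified Lean document; each statement's English description precedes it below -/
import Mathlib

section
/- Water-filling lemma: let E be a finite set, d : E → ℝ≥0, K ⊆ E, and c ∈ ℝ≥0 with ∑_{e∈K} d(e) ≤ c. Then there exists ℓ : E → ℝ≥0 such that (a) ℓ(e) = d(e) for all e ∈ K, (b) 0 ≤ ℓ(e) ≤ d(e) for all e ∈ E, (c) ∑_{e∈E} ℓ(e) ≤ c, and (d) ∑_{e∈E} ℓ(e) = min(c, ∑_{e∈E} d(e)). -/
theorem stmt_9 {E : Type*} [DecidableEq E] (s : Finset E) (d : E → ℝ)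
    (hd : ∀ e ∈ s, 0 ≤ d e) (K : Finset E) (hK : K ⊆ s)
    (c : ℝ) (hc : 0 ≤ c) (hKc : ∑ e ∈ K, d e ≤ c) :
    ∃ ℓ : E → ℝ,
      (∀ e ∈ K, ℓ e = d e) ∧
      (∀ e ∈ s, 0 ≤ ℓ e ∧ ℓ e ≤ d e) ∧
      (∑ e ∈ s, ℓ e ≤ c) ∧
      (∑ e ∈ s, ℓ e = min c (∑ e ∈ s, d e)) := by
  by_cases h : ∑ e ∈ s, d e ≤ c
  · exact ⟨d, fun e _ => rfl, fun e he => ⟨hd e he, le_refl _⟩, h,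
      by rw [min_eq_right h]⟩
  · push_neg at h
    set S := ∑ e ∈ K, d e with hS
    set T := ∑ e ∈ s \ K, d e with hT
    have hsplit : T + S = ∑ e ∈ s, d e := Finset.sum_sdiff hK
    have hTpos : 0 < T := by linarith
    set t := (c - S) / T with ht
    have ht0 : 0 ≤ t := div_nonneg (by linarith) hTpos.le
    have ht1 : t ≤ 1 := by
      rw [div_le_one hTpos]; linarith
    refine ⟨fun e => if e ∈ K then d e else t * d e, fun e he => if_pos he, ?_, ?_, ?_⟩
    · intro e he
      by_cases hek : e ∈ K
      · simp [hek, hd e he]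
      · simp only [hek, if_false]
        constructor
        · exact mul_nonneg ht0 (hd e he)
        · nlinarith [hd e he]
    · have : ∑ e ∈ s, (if e ∈ K then d e else t * d e) = c := by
        rw [← Finset.sum_sdiff hK]
        have h1 : ∑ e ∈ s \ K, (if e ∈ K then d e else t * d e) = t * T := by
          rw [hT, Finset.mul_sum]
          apply Finset.sum_congr rfl
          intro e he
          rw [if_neg (Finset.mem_sdiff.mp he).2]
        have h2 : ∑ e ∈ K, (if e ∈ K then d e else t * d e) = S := by
          apply Finset.sum_congr rfl
          intro e he; rw [if_pos he]
        rw [h1, h2, ht]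
        field_simp
        ring
      rw [this]
    · have : ∑ e ∈ s, (if e ∈ K then d e else t * d e) = c := by
        rw [← Finset.sum_sdiff hK]
        have h1 : ∑ e ∈ s \ K, (if e ∈ K then d e else t * d e) = t * T := by
          rw [hT, Finset.mul_sum]
          apply Finset.sum_congr rfl
          intro e he
          rw [if_neg (Finset.mem_sdiff.mp he).2]
        have h2 : ∑ e ∈ K, (if e ∈ K then d e else t * d e) = S := by
          apply Finset.sum_congr rfl
          intro e he; rw [if_pos he]
        rw [h1, h2, ht]
        field_simp
        ring
      rw [this, min_eq_left h.le]
end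

section
/- Call a subset A ⊆ V self-contained if there exists an assignment h : E[A] × A → ℝ≥0 with ∑_{v ∈ e∩A} h(e,v) = d(e) for every e ∈ E[A] and ∑_{e ∈ E[A], v∈e} h(e,v) ≤ s(v) for every v ∈ A, where E[A] = {e ∈ E : e ∩ A ≠ ∅}. Then the union of any two self-contained subsets of V is self-contained; consequently any finite family of vertices has a unique maximal self-contained subset contained in it (the union of all its self-contained subsets). -/
/-- `A` is self-contained: the supplies of `A` can fully serve the demands of all
edges incident to `A`. -/
def SelfContained {V : Type*} [DecidableEq V] (E : Finset (Finset V))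
    (d : Finset V → ℝ) (s : V → ℝ) (A : Finset V) : Prop :=
  ∃ h : Finset V → V → ℝ,
    (∀ e v, 0 ≤ h e v) ∧
    (∀ e ∈ E.filter (fun e => (e ∩ A).Nonempty), ∑ v ∈ e ∩ A, h e v = d e) ∧
    (∀ v ∈ A, ∑ e ∈ E.filter (fun e => (e ∩ A).Nonempty ∧ v ∈ e), h e v ≤ s v)

theorem stmt_12 {V : Type*} [Fintype V] [DecidableEq V]
    (E : Finset (Finset V)) (hE : ∀ e ∈ E, e.Nonempty)
    (d : Finset V → ℝ) (hd : ∀ e ∈ E, 0 ≤ d e)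
    (s : V → ℝ) (hs : ∀ v, 0 ≤ s v) :
    (∀ A B : Finset V, SelfContained E d s A → SelfContained E d s B →
        SelfContained E d s (A ∪ B)) ∧
    (∀ A : Finset V, ∃! S : Finset V, S ⊆ A ∧ SelfContained E d s S ∧
        ∀ B ⊆ A, SelfContained E d s B → B ⊆ S) := by
  classical
  have hempty : SelfContained E d s ∅ := by
    refine ⟨fun _ _ => 0, fun _ _ => le_refl 0, ?_, ?_⟩
    · intro e he; simp at he
    · intro v hv; simp at hv
  have hunion : ∀ A B : Finset V, SelfContained E d s A → SelfContained E d s B →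
      SelfContained E d s (A ∪ B) := by
    rintro A B ⟨hA, hA0, hAe, hAv⟩ ⟨hB, hB0, hBe, hBv⟩
    refine ⟨fun e v => if (e ∩ A).Nonempty then (if v ∈ A then hA e v else 0)
      else (if v ∈ B then hB e v else 0), ?_, ?_, ?_⟩
    · intro e v
      dsimp only
      split_ifs <;> first | exact hA0 e v | exact hB0 e v | exact le_refl 0
    · intro e he
      rw [Finset.mem_filter] at he
      obtain ⟨heE, hne⟩ := he
      by_cases hcA : (e ∩ A).Nonempty
      · simp only [if_pos hcA]
        rw [Finset.sum_ite_mem]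
        have : e ∩ (A ∪ B) ∩ A = e ∩ A := by
          ext x; simp only [Finset.mem_inter, Finset.mem_union]; tauto
        rw [this]
        exact hAe e (Finset.mem_filter.mpr ⟨heE, hcA⟩)
      · simp only [if_neg hcA]
        have heAB : e ∩ (A ∪ B) = e ∩ B := by
          rw [Finset.inter_union_distrib_left,
            Finset.not_nonempty_iff_eq_empty.mp hcA, Finset.empty_union]
        rw [heAB, Finset.sum_ite_mem]
        have : e ∩ B ∩ B = e ∩ B := by
          rw [Finset.inter_assoc, Finset.inter_self]
        rw [this]
        exact hBe e (Finset.mem_filter.mpr ⟨heE, heAB ▸ hne⟩)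
    · intro v hv
      rcases Finset.mem_union.mp hv with hvA | hvB
      · have hset : E.filter (fun e => (e ∩ (A ∪ B)).Nonempty ∧ v ∈ e)
            = E.filter (fun e => (e ∩ A).Nonempty ∧ v ∈ e) := by
          ext e
          simp only [Finset.mem_filter, and_congr_right_iff]
          intro _
          constructor
          · rintro ⟨_, hve⟩
            exact ⟨⟨v, Finset.mem_inter.mpr ⟨hve, hvA⟩⟩, hve⟩
          · rintro ⟨_, hve⟩
            exact ⟨⟨v, Finset.mem_inter.mpr ⟨hve, Finset.mem_union_left _ hvA⟩⟩, hve⟩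
        rw [hset]
        calc ∑ e ∈ E.filter (fun e => (e ∩ A).Nonempty ∧ v ∈ e),
              (if (e ∩ A).Nonempty then (if v ∈ A then hA e v else 0)
                else (if v ∈ B then hB e v else 0))
            = ∑ e ∈ E.filter (fun e => (e ∩ A).Nonempty ∧ v ∈ e), hA e v := by
              apply Finset.sum_congr rfl
              intro e he
              rw [Finset.mem_filter] at he
              rw [if_pos he.2.1, if_pos hvA]
          _ ≤ s v := hAv v hvA
      · by_cases hvA : v ∈ A
        · have hset : E.filter (fun e => (e ∩ (A ∪ B)).Nonempty ∧ v ∈ e)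
              = E.filter (fun e => (e ∩ A).Nonempty ∧ v ∈ e) := by
            ext e
            simp only [Finset.mem_filter, and_congr_right_iff]
            intro _
            constructor
            · rintro ⟨_, hve⟩
              exact ⟨⟨v, Finset.mem_inter.mpr ⟨hve, hvA⟩⟩, hve⟩
            · rintro ⟨_, hve⟩
              exact ⟨⟨v, Finset.mem_inter.mpr ⟨hve, Finset.mem_union_left _ hvA⟩⟩, hve⟩
          rw [hset]
          calc ∑ e ∈ E.filter (fun e => (e ∩ A).Nonempty ∧ v ∈ e),
                (if (e ∩ A).Nonempty then (if v ∈ A then hA e v else 0)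
                  else (if v ∈ B then hB e v else 0))
              = ∑ e ∈ E.filter (fun e => (e ∩ A).Nonempty ∧ v ∈ e), hA e v := by
                apply Finset.sum_congr rfl
                intro e he
                rw [Finset.mem_filter] at he
                rw [if_pos he.2.1, if_pos hvA]
            _ ≤ s v := hAv v hvA
        · calc ∑ e ∈ E.filter (fun e => (e ∩ (A ∪ B)).Nonempty ∧ v ∈ e),
                (if (e ∩ A).Nonempty then (if v ∈ A then hA e v else 0)
                  else (if v ∈ B then hB e v else 0))
              = ∑ e ∈ E.filter (fun e => (e ∩ (A ∪ B)).Nonempty ∧ v ∈ e),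
                  (if ¬ (e ∩ A).Nonempty then hB e v else 0) := by
                apply Finset.sum_congr rfl
                intro e _
                by_cases hcA : (e ∩ A).Nonempty
                · rw [if_pos hcA, if_neg hvA, if_neg (not_not_intro hcA)]
                · rw [if_neg hcA, if_pos hvB, if_pos hcA]
            _ = ∑ e ∈ (E.filter (fun e => (e ∩ (A ∪ B)).Nonempty ∧ v ∈ e)).filter
                  (fun e => ¬ (e ∩ A).Nonempty), hB e v :=
                (Finset.sum_filter _ _).symm
            _ ≤ ∑ e ∈ E.filter (fun e => (e ∩ B).Nonempty ∧ v ∈ e), hB e v := by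
                apply Finset.sum_le_sum_of_subset_of_nonneg
                · intro e he
                  simp only [Finset.mem_filter] at he ⊢
                  exact ⟨he.1.1, ⟨v, Finset.mem_inter.mpr ⟨he.1.2.2, hvB⟩⟩, he.1.2.2⟩
                · intro e _ _; exact hB0 e v
            _ ≤ s v := hBv v hvB
  refine ⟨hunion, fun A => ?_⟩
  set F := A.powerset.filter (fun B => SelfContained E d s B) with hF
  refine ⟨F.sup id, ⟨?_, ?_, ?_⟩, ?_⟩
  · exact Finset.le_iff_subset.mp (Finset.sup_le (f := id) fun B hB =>
      Finset.le_iff_subset.mpr (Finset.mem_powerset.mp (Finset.mem_filter.mp hB).1))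
  · exact Finset.sup_induction hempty (fun a ha b hb => hunion a b ha hb)
      (fun B hB => (Finset.mem_filter.mp hB).2)
  · intro B hBA hBsc
    exact Finset.le_iff_subset.mp (Finset.le_sup (f := id)
      (Finset.mem_filter.mpr ⟨Finset.mem_powerset.mpr hBA, hBsc⟩))
  · rintro S' ⟨hS'A, hS'sc, hS'max⟩
    apply Finset.Subset.antisymm
    · exact Finset.le_iff_subset.mp (Finset.le_sup (f := id)
        (Finset.mem_filter.mpr ⟨Finset.mem_powerset.mpr hS'A, hS'sc⟩))
    · exact hS'max _ (Finset.le_iff_subset.mp (Finset.sup_le (f := id) fun B hB =>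
        Finset.le_iff_subset.mpr (Finset.mem_powerset.mp (Finset.mem_filter.mp hB).1)))
        (Finset.sup_induction hempty (fun a ha b hb => hunion a b ha hb)
          (fun B hB => (Finset.mem_filter.mp hB).2))
end
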